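/- Let n = 2ν+1 be an odd integer with n ≥ 3. Then there exists a symmetric voltage assignment on a base graph with ν vertices over the group ℤ_n whose lift is isomorphic to the Johnson graph J(n,2). Precisely: there exists a function N : Fin ν × Fin ν → Multiset (ZMod n) satisfying N(v,u) = (N(u,v)).map(λ t, −t) for all u, v, and such that 0 ∉ N(u,u) for all u, for which the lift graph — the simple graph on vertex set Fin ν × ZMod n in which (u,g) is adjacent to (v,h) if and only if h − g ∈ N(u,v) — is isomorphic to J(n,2). -/

import Mathlib

/-- The Johnson graph `J(n,k)`: vertices are the `k`-element subsets of `ZMod n`,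
two subsets being adjacent iff their intersection has exactly `k-1` elements. -/
def johnsonGraph (n k : ℕ) : SimpleGraph {A : Finset (ZMod n) // A.card = k} where
  Adj A B := ((A : Finset (ZMod n)) ∩ (B : Finset (ZMod n))).card + 1 = k
  symm := ⟨fun A B h => by rwa [Finset.inter_comm]⟩
  loopless := ⟨fun A h => by
    rw [Finset.inter_self, A.2] at h
    omega⟩

theorem stmt_1 (ν : ℕ) (hν : 1 ≤ ν) :
    ∃ N : Fin ν × Fin ν → Multiset (ZMod (2 * ν + 1)),
      (∀ u v : Fin ν, N (v, u) = (N (u, v)).map (fun t => -t)) ∧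
      (∀ u : Fin ν, (0 : ZMod (2 * ν + 1)) ∉ N (u, u)) ∧
      ∃ lift : SimpleGraph (Fin ν × ZMod (2 * ν + 1)),
        (∀ p q : Fin ν × ZMod (2 * ν + 1),
          lift.Adj p q ↔ q.2 - p.2 ∈ N (p.1, q.1)) ∧
        Nonempty (lift ≃g johnsonGraph (2 * ν + 1) 2) := by
  set n := 2 * ν + 1 with hn
  haveI : NeZero n := ⟨by omega⟩
  -- the voltage differences
  set d : Fin ν → ZMod n := fun u => (((u : ℕ) + 1 : ℕ) : ZMod n) with hdq
  have hval : ∀ u : Fin ν, (d u).val = (u : ℕ) + 1 := by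
    intro u
    have := u.isLt
    exact ZMod.val_natCast_of_lt (by omega)
  have hd0 : ∀ u, d u ≠ 0 := by
    intro u h
    have := hval u
    rw [h, ZMod.val_zero] at this
    omega
  have hdd : ∀ u v, d u + d v ≠ 0 := by
    intro u v h
    have h1 := hval u
    have h2 := hval v
    have hu := u.isLt
    have hv := v.isLt
    have : (d u + d v).val = (u : ℕ) + 1 + ((v : ℕ) + 1) := by
      rw [ZMod.val_add_of_lt (by omega), h1, h2]
    rw [h, ZMod.val_zero] at this
    omega
  have hdinj : ∀ u v : Fin ν, d u = d v → u = v := by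
    intro u v h
    have h1 := hval u
    have h2 := hval v
    rw [h] at h1
    exact Fin.ext (by omega)
  -- the voltage assignment
  set Nf : Fin ν × Fin ν → Multiset (ZMod n) := fun p =>
    if p.1 = p.2 then {d p.1, -(d p.1)}
    else {0, d p.1, -(d p.2), d p.1 - d p.2} with hNf
  have hcard : ∀ (u : Fin ν) (g : ZMod n), ({g, g + d u} : Finset (ZMod n)).card = 2 := by
    intro u g
    refine Finset.card_pair fun h => hd0 u ?_
    exact (left_eq_add.mp h)
  -- the map from the lift's vertex set to Johnson vertices
  set F : Fin ν × ZMod n → {A : Finset (ZMod n) // A.card = 2} :=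
    fun p => ⟨{p.2, p.2 + d p.1}, hcard p.1 p.2⟩ with hF
  have hFinj : Function.Injective F := by
    rintro ⟨u, g⟩ ⟨v, h⟩ heq
    simp only [hF, Subtype.mk.injEq] at heq
    have hg : g ∈ ({h, h + d v} : Finset (ZMod n)) := by
      rw [← heq]; exact Finset.mem_insert_self _ _
    simp only [Finset.mem_insert, Finset.mem_singleton] at hg
    rcases hg with hg | hg
    · subst hg
      have hgd : g + d u ∈ ({g, g + d v} : Finset (ZMod n)) := by
        rw [← heq]; exact Finset.mem_insert_of_mem (Finset.mem_singleton_self _)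
      simp only [Finset.mem_insert, Finset.mem_singleton] at hgd
      rcases hgd with hgd | hgd
      · exact absurd (left_eq_add.mp hgd.symm) (hd0 u)
      · have := hdinj u v (add_left_cancel hgd)
        subst this; rfl
    · have hh : h ∈ ({g, g + d u} : Finset (ZMod n)) := by
        rw [heq]; exact Finset.mem_insert_self _ _
      simp only [Finset.mem_insert, Finset.mem_singleton] at hh
      rcases hh with hh | hh
      · subst hh
        exact ((hd0 v) (left_eq_add.mp hg)).elim
      · exfalso
        rw [hh] at hg
        have : d u + d v = 0 := by
          have := left_eq_add.mp (by linear_combination hg : g = g + (d u + d v))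
          exact this
        exact hdd u v this
  have hFsurj : Function.Surjective F := by
    rintro ⟨A, hA⟩
    obtain ⟨a, b, hab, rfl⟩ := Finset.card_eq_two.mp hA
    have hba : b - a ≠ 0 := sub_ne_zero.mpr (Ne.symm hab)
    set m := (b - a).val with hm
    have hm1 : 1 ≤ m := ZMod.val_pos.mpr hba
    have hm2 : m < n := ZMod.val_lt _
    have hcast : ((m : ℕ) : ZMod n) = b - a := by
      rw [hm]; exact ZMod.natCast_rightInverse _
    by_cases hcase : m ≤ ν
    · refine ⟨(⟨m - 1, by omega⟩, a), ?_⟩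
      simp only [hF]
      refine Subtype.ext ?_
      show ({a, a + d _} : Finset (ZMod n)) = {a, b}
      have hdval : d (⟨m - 1, by omega⟩ : Fin ν) = b - a := by
        show (((m - 1) + 1 : ℕ) : ZMod n) = b - a
        rw [Nat.sub_add_cancel hm1, hcast]
      rw [hdval, add_sub_cancel]
    · have hneg : (a - b).val = n - m := by
        have h1 : a - b = -(b - a) := by ring
        rw [h1, ZMod.neg_val, if_neg hba]
      refine ⟨(⟨n - m - 1, by omega⟩, b), ?_⟩
      refine Subtype.ext ?_
      show ({b, b + d _} : Finset (ZMod n)) = {a, b}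
      have hdval : d (⟨n - m - 1, by omega⟩ : Fin ν) = a - b := by
        show (((n - m - 1) + 1 : ℕ) : ZMod n) = a - b
        have : n - m - 1 + 1 = n - m := by omega
        rw [this, ← hneg]
        exact ZMod.natCast_rightInverse _
      rw [hdval, add_sub_cancel]
      exact Finset.pair_comm b a
  set e : (Fin ν × ZMod n) ≃ {A : Finset (ZMod n) // A.card = 2} :=
    Equiv.ofBijective F ⟨hFinj, hFsurj⟩ with he
  -- intersection of two 2-sets has card 1 iff nonempty and unequal
  have key : ∀ A B : Finset (ZMod n), A.card = 2 → B.card = 2 →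
      ((A ∩ B).card = 1 ↔ (A ∩ B).Nonempty ∧ A ≠ B) := by
    intro A B hA hB
    constructor
    · intro h
      refine ⟨Finset.card_pos.mp (by omega), ?_⟩
      rintro rfl
      rw [Finset.inter_self, hA] at h
      omega
    · rintro ⟨hne, hAB⟩
      have h1 : 1 ≤ (A ∩ B).card := Finset.card_pos.mpr hne
      have h2 : (A ∩ B).card ≤ 2 :=
        le_trans (Finset.card_le_card Finset.inter_subset_left) hA.le
      by_contra hc
      have hcc : (A ∩ B).card = 2 := by omega
      have e1 : A ∩ B = A :=
        Finset.eq_of_subset_of_card_le Finset.inter_subset_left (by omega)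
      have e2 : A ∩ B = B :=
        Finset.eq_of_subset_of_card_le Finset.inter_subset_right (by omega)
      exact hAB (e1.symm.trans e2)
  -- nonemptiness of the intersection in terms of the difference
  have hinter : ∀ (u : Fin ν) (g : ZMod n) (v : Fin ν) (h : ZMod n),
      (({g, g + d u} ∩ {h, h + d v} : Finset (ZMod n)).Nonempty ↔
        (h - g = 0 ∨ h - g = d u ∨ h - g = -(d v) ∨ h - g = d u - d v)) := by
    intro u g v h
    constructor
    · rintro ⟨x, hx⟩
      simp only [Finset.mem_inter, Finset.mem_insert, Finset.mem_singleton] at hx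
      obtain ⟨hx1 | hx1, hx2 | hx2⟩ := hx <;> subst hx1 <;>
        [left; (right; right; left); (right; left); (right; right; right)] <;>
        linear_combination -hx2
    · rintro (ht | ht | ht | ht)
      · have hh : h = g := by linear_combination ht
        refine ⟨g, Finset.mem_inter.mpr ⟨Finset.mem_insert_self _ _, ?_⟩⟩
        rw [hh]
        exact Finset.mem_insert_self _ _
      · have hh : h = g + d u := by linear_combination ht
        refine ⟨h, Finset.mem_inter.mpr ⟨?_, Finset.mem_insert_self _ _⟩⟩
        rw [hh]
        exact Finset.mem_insert_of_mem (Finset.mem_singleton_self _)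
      · have hh : g = h + d v := by linear_combination -ht
        refine ⟨g, Finset.mem_inter.mpr ⟨Finset.mem_insert_self _ _, ?_⟩⟩
        rw [hh]
        exact Finset.mem_insert_of_mem (Finset.mem_singleton_self _)
      · have hh : g + d u = h + d v := by linear_combination -ht
        refine ⟨g + d u, Finset.mem_inter.mpr
          ⟨Finset.mem_insert_of_mem (Finset.mem_singleton_self _), ?_⟩⟩
        rw [hh]
        exact Finset.mem_insert_of_mem (Finset.mem_singleton_self _)
  -- the core adjacency computation
  have hadj : ∀ (u : Fin ν) (g : ZMod n) (v : Fin ν) (h : ZMod n),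
      ((johnsonGraph n 2).Adj (F (u, g)) (F (v, h)) ↔ h - g ∈ Nf (u, v)) := by
    intro u g v h
    have hAdj : (johnsonGraph n 2).Adj (F (u, g)) (F (v, h)) ↔
        (({g, g + d u} ∩ {h, h + d v} : Finset (ZMod n)).card = 1) := by
      show (({g, g + d u} ∩ {h, h + d v} : Finset (ZMod n)).card + 1 = 2) ↔ _
      omega
    rw [hAdj, key _ _ (hcard u g) (hcard v h), hinter]
    have hEq : (({g, g + d u} : Finset (ZMod n)) = {h, h + d v}) ↔ (u = v ∧ g = h) := by
      constructor
      · intro hset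
        have := hFinj (a₁ := (u, g)) (a₂ := (v, h)) (Subtype.ext hset)
        exact ⟨congrArg Prod.fst this, congrArg Prod.snd this⟩
      · rintro ⟨rfl, rfl⟩
        rfl
    by_cases huv : u = v
    · subst huv
      simp only [hNf, if_pos rfl, Multiset.insert_eq_cons, Multiset.mem_cons,
        Multiset.mem_singleton]
      constructor
      · rintro ⟨hts, hne⟩
        have h0 : h - g ≠ 0 := by
          intro h0
          exact hne (hEq.mpr ⟨rfl, (sub_eq_zero.mp h0).symm⟩)
        rcases hts with ht | ht | ht | ht
        · exact absurd ht h0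
        · exact Or.inl ht
        · exact Or.inr ht
        · rw [sub_self] at ht
          exact absurd ht h0
      · rintro (ht | ht)
        · refine ⟨Or.inr (Or.inl ht), fun hset => ?_⟩
          have hg : g = h := (hEq.mp hset).2
          rw [hg, sub_self] at ht
          exact hd0 u ht.symm
        · refine ⟨Or.inr (Or.inr (Or.inl ht)), fun hset => ?_⟩
          have hg : g = h := (hEq.mp hset).2
          rw [hg, sub_self] at ht
          exact hd0 u (neg_eq_zero.mp ht.symm)
    · simp only [hNf, if_neg huv, Multiset.insert_eq_cons, Multiset.mem_cons,
        Multiset.mem_singleton]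
      constructor
      · rintro ⟨ht, -⟩
        exact ht
      · intro ht
        exact ⟨ht, fun hset => huv (hEq.mp hset).1⟩
  refine ⟨Nf, ?_, ?_, SimpleGraph.comap (⇑e.toEmbedding) (johnsonGraph n 2), ?_,
    ⟨SimpleGraph.Iso.comap e _⟩⟩
  · -- symmetry
    intro u v
    by_cases huv : u = v
    · subst huv
      simp only [hNf, if_pos rfl, Multiset.insert_eq_cons]
      simp only [Multiset.map_cons, Multiset.map_singleton, neg_neg]
      exact Multiset.cons_swap _ _ _
    · simp only [hNf, if_neg huv, if_neg (Ne.symm huv), Multiset.insert_eq_cons]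
      simp only [Multiset.map_cons, Multiset.map_singleton, neg_zero, neg_neg, neg_sub]
      exact congrArg (Multiset.cons 0) (Multiset.cons_swap _ _ _)
  · -- no loops
    intro u
    simp only [hNf, if_pos rfl, Multiset.insert_eq_cons, Multiset.mem_cons,
      Multiset.mem_singleton]
    rintro (h | h)
    · exact hd0 u h.symm
    · exact hd0 u (neg_eq_zero.mp h.symm)
  · -- adjacency description
    rintro ⟨u, g⟩ ⟨v, h⟩
    exact hadj u g v h
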